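/- Let w be an infinite word over a d-letter alphabet (d ≥ 2) and k ≥ 1. If for every pair of distinct letters i, j, every two k-binomially equivalent factors of the projection π_{i,j}(w) are equal, then every two k-binomially equivalent factors of w are equal (i.e., the k-binomial complexity of w coincides with its subword complexity). -/

import Mathlib

/-- Number of occurrences of `x` as a scattered subword of `w`. -/
def binom {α : Type*} [DecidableEq α] (w x : List α) : ℕ := w.sublists.count x

/-- `k`-binomial equivalence of finite words. -/
def KBinEquiv {α : Type*} [DecidableEq α] (k : ℕ) (u v : List α) : Prop :=
  ∀ x : List α, x.length ≤ k → binom u x = binom v x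

/-- `u` is a factor (finite contiguous subword) of the infinite word `w`. -/
def Factor {α : Type*} (w : ℕ → α) (u : List α) : Prop :=
  ∃ s : ℕ, u = (List.range u.length).map (fun t => w (s + t))

/-- `u` is a factor of the projection of the infinite word `w` onto `{i, j}`:
factors of the projection are exactly the projections of factors of `w`. -/
def FactorProj {α : Type*} [DecidableEq α] (w : ℕ → α) (i j : α) (u : List α) : Prop :=
  ∃ s n : ℕ,
    u = ((List.range n).map (fun t => w (s + t))).filter (fun c => decide (c = i ∨ c = j))

theorem binom_cons {α : Type*} [DecidableEq α] (a b : α) (u t : List α) :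
    binom (a::u) (b::t) = binom u (b::t) + if a = b then binom u t else 0 := by
  simp only [binom, List.sublists_cons, List.bind_eq_flatMap, List.count_flatMap]
  induction u.sublists with
  | nil => simp
  | cons s l ih =>
    simp only [List.map_cons, List.sum_cons, ih, Function.comp_apply, List.count_cons,
      List.count_nil, List.cons.injEq]
    split_ifs <;> simp_all <;> omega

theorem binom_nil {α : Type*} [DecidableEq α] (w : List α) : binom w ([] : List α) = 1 := by
  induction w with
  | nil => simp [binom]
  | cons a u ih =>
    simp only [binom, List.sublists_cons, List.bind_eq_flatMap, List.count_flatMap] at *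
    rw [show (List.map (List.count ([] : List α) ∘ fun x => [x, a :: x]) u.sublists).sum
        = List.count ([] : List α) u.sublists from ?_, ih]
    induction u.sublists with
    | nil => simp
    | cons s l ih2 =>
      simp only [List.map_cons, List.sum_cons, ih2, Function.comp_apply, List.count_cons,
        List.count_nil]
      split_ifs <;> simp_all <;> omega

/-- If all letters of `x` satisfy `p`, filtering by `p` does not change the binomial count. -/
theorem binom_filter_of_all {α : Type*} [DecidableEq α] (p : α → Bool) :
    ∀ (u x : List α), (∀ a ∈ x, p a) → binom (u.filter p) x = binom u x := by
  intro u
  induction u with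
  | nil => simp
  | cons a u ih =>
    intro x hx
    by_cases hpa : p a
    · rw [List.filter_cons_of_pos hpa]
      cases x with
      | nil => rw [binom_nil, binom_nil]
      | cons b t =>
        rw [binom_cons, binom_cons, ih _ hx, ih _ (fun c hc => hx c (List.mem_cons_of_mem _ hc))]
    · rw [List.filter_cons_of_neg hpa, ih _ hx]
      cases x with
      | nil => rw [binom_nil, binom_nil]
      | cons b t =>
        rw [binom_cons, if_neg, Nat.add_zero]
        intro hab
        exact hpa (hab ▸ hx b List.mem_cons_self)

theorem binom_filter_of_bad {α : Type*} [DecidableEq α] (p : α → Bool) (u x : List α)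
    (a : α) (ha : a ∈ x) (hpa : ¬ p a) : binom (u.filter p) x = 0 := by
  rw [binom, List.count_eq_zero]
  intro hmem
  rw [List.mem_sublists] at hmem
  exact hpa (List.of_mem_filter (hmem.subset ha))

/-- A word is determined by its projections onto all pairs of distinct letters. -/
theorem eq_of_proj_eq {α : Type*} [DecidableEq α] [Nontrivial α] :
    ∀ u v : List α,
      (∀ i j : α, i ≠ j →
        u.filter (fun c => decide (c = i ∨ c = j)) = v.filter (fun c => decide (c = i ∨ c = j)))
      → u = v := by
  intro u
  induction u with
  | nil =>
    intro v hv
    cases v with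
    | nil => rfl
    | cons b v' =>
      obtain ⟨j, hj⟩ := exists_ne b
      have := hv b j (Ne.symm hj)
      simp at this
  | cons a u' ih =>
    intro v hv
    cases v with
    | nil =>
      obtain ⟨j, hj⟩ := exists_ne a
      have := hv a j (Ne.symm hj)
      simp at this
    | cons b v' =>
      have hab : a = b := by
        by_contra hab
        have := hv a b hab
        simp [List.filter_cons, hab] at this
      subst hab
      have htail : ∀ i j : α, i ≠ j →
          u'.filter (fun c => decide (c = i ∨ c = j))
            = v'.filter (fun c => decide (c = i ∨ c = j)) := by
        intro i j hij
        have := hv i j hij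
        by_cases hmem : a = i ∨ a = j <;>
          simp only [List.filter_cons, hmem, decide_eq_true_eq, if_pos, if_neg, decide_eq_false,
            not_false_iff, List.cons.injEq, true_and, if_true, if_false] at this <;>
          first
          | exact this
          | simpa [hmem] using this
      rw [ih v' htail]

theorem stmt_11 {α : Type*} [DecidableEq α] [Nontrivial α] (w : ℕ → α) (k : ℕ) (hk : 1 ≤ k)
    (h : ∀ i j : α, i ≠ j → ∀ u v : List α,
      FactorProj w i j u → FactorProj w i j v → KBinEquiv k u v → u = v) :
    ∀ u v : List α, Factor w u → Factor w v → KBinEquiv k u v → u = v := by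
  intro u v hu hv heq
  apply eq_of_proj_eq
  intro i j hij
  set p : α → Bool := fun c => decide (c = i ∨ c = j) with hp
  apply h i j hij
  · obtain ⟨s, hs⟩ := hu
    exact ⟨s, u.length, by rw [← hs]⟩
  · obtain ⟨s, hs⟩ := hv
    exact ⟨s, v.length, by rw [← hs]⟩
  · intro x hx
    by_cases hall : ∀ a ∈ x, p a
    · rw [binom_filter_of_all p u x hall, binom_filter_of_all p v x hall, heq x hx]
    · push_neg at hall
      obtain ⟨a, ha, hpa⟩ := hall
      rw [binom_filter_of_bad p u x a ha (by simp [hpa]),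
        binom_filter_of_bad p v x a ha (by simp [hpa])]
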